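/- Let k be a field with a family of non-archimedean absolute values {|·|_v} satisfying the product formula ∏_v |α|_v^{N_v} = 1 for all α ∈ k^×, and suppose the constant field k_0 = {α ∈ k : |α|_v ≤ 1 for all v} satisfies: if α ∈ k_0 is nonzero then |α|_v = 1 for all v. Assume every residue field k_v has characteristic zero (so |d|_v = 1 for the integer d ≥ 2). Let c ∈ k with c ∉ k_0, and suppose α, β ∈ k are such that conjugation by z ↦ αz + β sends z^d + c to a polynomial with all coefficients in k_0. Then a contradiction follows; i.e., z^d + c is not trivial over k. -/

import Mathlib

open Polynomial

/-- Let `k` be a field with a family `v i` of non-archimedean absolute values satisfying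
the product formula, whose constant field `k₀ = {α | ∀ i, v i α ≤ 1}` has the property
that nonzero elements have all absolute values `1`, and with all residue characteristics
zero (`v i d = 1`).  If `c ∉ k₀` and conjugating `z^d + c` by `z ↦ αz + β` (with `α ≠ 0`)
yields a polynomial with all coefficients in `k₀`, then a contradiction follows:
`z^d + c` is not trivial over `k`. -/
theorem stmt7 {k : Type*} [Field k] {ι : Type*} (v : ι → AbsoluteValue k ℝ) (N : ι → ℕ)
    (hN : ∀ i, 1 ≤ N i)
    (hna : ∀ i, ∀ x y : k, v i (x + y) ≤ max (v i x) (v i y))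
    (hprod : ∀ α : k, α ≠ 0 →
      ({i | v i α ≠ 1}.Finite ∧ ∏ᶠ i, (v i α) ^ (N i) = 1))
    (hconst : ∀ x : k, x ≠ 0 → (∀ i, v i x ≤ 1) → ∀ i, v i x = 1)
    (d : ℕ) (hd : 2 ≤ d) (hres : ∀ i, v i (d : k) = 1)
    (c : k) (hc : ¬ ∀ i, v i c ≤ 1)
    (α β : k) (hα : α ≠ 0)
    (hconj : ∀ m : ℕ, ∀ i,
      v i ((C α⁻¹ * ((C α * X + C β) ^ d + C c - C β)).coeff m) ≤ 1) :
    False := by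
  have key : ∀ m : ℕ, (C α⁻¹ * ((C α * X + C β) ^ d + C c - C β)).coeff m
      = α⁻¹ * (α ^ d * ((β * α⁻¹) ^ (d - m) * (d.choose m : k)) +
        (if m = 0 then c - β else 0)) := by
    intro m
    have h1 : C α * X + C β = C α * (X + C (β * α⁻¹)) := by
      rw [mul_add, ← C_mul]
      field_simp
    rw [h1, mul_pow, ← C_pow, coeff_C_mul, coeff_sub, coeff_add, coeff_C_mul,
      coeff_X_add_C_pow, coeff_C, coeff_C]
    split_ifs <;> ring
  -- value at coefficient d : α^(d-1)
  have hd0 : d ≠ 0 := by omega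
  have hαle : ∀ j, v j α ≤ 1 := by
    intro j
    have h := hconj d j
    rw [key d] at h
    simp only [hd0, reduceIte, if_neg hd0, Nat.sub_self, pow_zero, Nat.choose_self,
      Nat.cast_one, mul_one, one_mul, add_zero] at h
    have : α⁻¹ * α ^ d = α ^ (d - 1) := by
      rw [← pow_sub_one_mul hd0 α]
      field_simp
    rw [this, map_pow] at h
    by_contra hgt
    push_neg at hgt
    have := one_lt_pow₀ hgt (by omega : d - 1 ≠ 0)
    linarith
  have hα1 : ∀ j, v j α = 1 := hconst α hα hαle
  have hαinv : ∀ j, v j α⁻¹ = 1 := by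
    intro j; rw [map_inv₀, hα1 j, inv_one]
  -- pick a place where v c > 1
  push_neg at hc
  obtain ⟨i, hci⟩ := hc
  -- coefficient 1 gives v i β ≤ 1
  have hβ : v i β ≤ 1 := by
    have h := hconj 1 i
    rw [key 1] at h
    simp only [one_ne_zero, reduceIte, add_zero, Nat.choose_one_right] at h
    rw [mul_pow] at h
    have heq : α⁻¹ * (α ^ d * (β ^ (d - 1) * (α⁻¹) ^ (d - 1) * (d : k)))
        = β ^ (d - 1) * (d : k) := by
      have : α ^ d = α * α ^ (d - 1) := by
        conv_lhs => rw [show d = 1 + (d - 1) by omega]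
        rw [pow_add, pow_one]
      rw [this]
      field_simp
      rw [mul_comm (α ^ (d - 1)), mul_assoc (β ^ (d - 1)), ← mul_pow, mul_one_div_cancel hα,
        one_pow, mul_one]
    rw [heq, map_mul, map_pow, hres i, mul_one] at h
    by_contra hgt
    push_neg at hgt
    have := one_lt_pow₀ hgt (by omega : d - 1 ≠ 0)
    linarith
  -- coefficient 0
  have h0 := hconj 0 i
  rw [key 0] at h0
  simp only [reduceIte, Nat.sub_zero, Nat.choose_zero_right, Nat.cast_one, mul_one] at h0
  have heq0 : α⁻¹ * (α ^ d * (β * α⁻¹) ^ d + (c - β)) = α⁻¹ * (c + (β ^ d - β)) := by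
    rw [mul_pow]
    have : α ^ d * (β ^ d * (α⁻¹) ^ d) = β ^ d := by
      field_simp
      rw [mul_comm (α ^ d), mul_assoc (β ^ d), ← mul_pow, mul_one_div_cancel hα, one_pow, mul_one]
    rw [this]; ring
  rw [heq0, map_mul, hαinv i, one_mul] at h0
  have hs : v i (β ^ d - β) ≤ 1 := by
    have := hna i (β ^ d) (-β)
    rw [sub_eq_add_neg]
    refine le_trans this (max_le ?_ ?_)
    · rw [map_pow]; exact pow_le_one₀ ((v i).nonneg β) hβ
    · rw [(v i).map_neg]; exact hβ
  have : v i c ≤ 1 := by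
    have hdec : c = (c + (β ^ d - β)) + (-(β ^ d - β)) := by ring
    calc v i c = v i ((c + (β ^ d - β)) + (-(β ^ d - β))) := by rw [← hdec]
    _ ≤ max (v i (c + (β ^ d - β))) (v i (-(β ^ d - β))) := hna i _ _
    _ ≤ 1 := max_le h0 (by rwa [(v i).map_neg])
  linarith
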